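/- Let (X,d) be a finite ultrametric space with |X| ≥ 3. Then |Sp(X)| = |X| if and only if there exists an enumeration x₁,...,xₙ of all points of X such that the map i ↦ d(xᵢ, xᵢ₊₁), for 1 ≤ i ≤ n−1, is injective (i.e., the n−1 consecutive distances along this Hamiltonian path are pairwise distinct and positive). -/

import Mathlib

namespace CharHamAux

variable {X : Type*} [DecidableEq X] (d : X → X → ℝ)

/-- The spectrum of a finite subspace. -/
noncomputable def spec (s : Finset X) : Finset ℝ := (s ×ˢ s).image fun p => d p.1 p.2

/-- Positive part of the spectrum. -/
noncomputable def pspec (s : Finset X) : Finset ℝ := (spec d s).filter (0 < ·)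

lemma mem_spec {s : Finset X} {v : ℝ} :
    v ∈ spec d s ↔ ∃ x ∈ s, ∃ y ∈ s, d x y = v := by
  simp only [spec, Finset.mem_image, Finset.mem_product, Prod.exists]
  constructor
  · rintro ⟨x, y, ⟨hx, hy⟩, rfl⟩; exact ⟨x, hx, y, hy, rfl⟩
  · rintro ⟨x, hx, y, hy, rfl⟩; exact ⟨x, y, ⟨hx, hy⟩, rfl⟩

lemma mem_pspec {s : Finset X} {v : ℝ} :
    v ∈ pspec d s ↔ (∃ x ∈ s, ∃ y ∈ s, d x y = v) ∧ 0 < v := by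
  simp only [pspec, Finset.mem_filter, mem_spec]

lemma pspec_mono {s t : Finset X} (h : s ⊆ t) : pspec d s ⊆ pspec d t := by
  intro v hv
  rw [mem_pspec] at hv ⊢
  obtain ⟨⟨x, hx, y, hy, hv⟩, hpos⟩ := hv
  exact ⟨⟨x, h hx, y, h hy, hv⟩, hpos⟩

variable (hnonneg : ∀ x y, 0 ≤ d x y)
variable (hsymm : ∀ x y, d x y = d y x)
variable (hzero : ∀ x y, d x y = 0 ↔ x = y)
variable (hultra : ∀ x y z, d x y ≤ max (d x z) (d z y))

include hnonneg hzero in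
lemma card_spec (s : Finset X) (hs : s.Nonempty) :
    (spec d s).card = (pspec d s).card + 1 := by
  have hneg : (spec d s).filter (fun v => ¬ 0 < v) = {0} := by
    ext v
    simp only [Finset.mem_filter, Finset.mem_singleton]
    constructor
    · rintro ⟨hv, hnp⟩
      rw [mem_spec] at hv
      obtain ⟨x, _, y, _, rfl⟩ := hv
      have h1 := hnonneg x y
      have h2 := not_lt.mp hnp
      linarith
    · rintro rfl
      exact ⟨(mem_spec d).mpr ⟨hs.choose, hs.choose_spec, hs.choose, hs.choose_spec,
        (hzero _ _).mpr rfl⟩, by simp⟩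
  have h := Finset.card_filter_add_card_filter_not
    (s := spec d s) (p := (0 < ·))
  rw [hneg, Finset.card_singleton] at h
  exact h.symm

include hnonneg hsymm hzero hultra in
/-- Splitting at the maximal distance. -/
lemma split (s : Finset X) (h2 : 2 ≤ s.card) :
    ∃ (s1 s2 : Finset X) (M : ℝ),
      s1 ⊆ s ∧ s2 ⊆ s ∧ Disjoint s1 s2 ∧ s1.Nonempty ∧ s2.Nonempty ∧
      s1 ∪ s2 = s ∧ s1.card + s2.card = s.card ∧ 0 < M ∧
      (∀ x ∈ s1, ∀ y ∈ s2, d x y = M) ∧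
      (M ∉ pspec d s1) ∧
      pspec d s = insert M (pspec d s1 ∪ pspec d s2) := by
  have hs : s.Nonempty := Finset.card_pos.mp (by omega)
  have hspec_ne : (spec d s).Nonempty :=
    ⟨0, (mem_spec d).mpr ⟨hs.choose, hs.choose_spec, hs.choose, hs.choose_spec,
      (hzero _ _).mpr rfl⟩⟩
  set M := (spec d s).max' hspec_ne with hM
  have hle : ∀ x ∈ s, ∀ y ∈ s, d x y ≤ M := fun x hx y hy =>
    Finset.le_max' _ _ ((mem_spec d).mpr ⟨x, hx, y, hy, rfl⟩)
  obtain ⟨a, ha, b, hb, hab⟩ := Finset.one_lt_card.mp (show 1 < s.card by omega)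
  have hMpos : 0 < M := by
    have h1 : d a b ≤ M := hle a ha b hb
    have h2 : 0 < d a b := lt_of_le_of_ne (hnonneg a b)
      (fun h => hab ((hzero a b).mp h.symm))
    linarith
  obtain ⟨p, hp, q, hq, hpq⟩ := (mem_spec d).mp ((spec d s).max'_mem hspec_ne)
  set s1 := s.filter (fun y => d p y < M) with hs1
  set s2 := s.filter (fun y => ¬ d p y < M) with hs2
  have hsub1 : s1 ⊆ s := Finset.filter_subset _ _
  have hsub2 : s2 ⊆ s := Finset.filter_subset _ _
  have hdisj : Disjoint s1 s2 := Finset.disjoint_filter_filter_not s s _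
  have hunion : s1 ∪ s2 = s := Finset.filter_union_filter_not_eq _ s
  have hmem1 : ∀ {x}, x ∈ s1 ↔ x ∈ s ∧ d p x < M := fun {x} => Finset.mem_filter
  have hmem2 : ∀ {x}, x ∈ s2 ↔ x ∈ s ∧ ¬ d p x < M := fun {x} => Finset.mem_filter
  have hne1 : s1.Nonempty :=
    ⟨p, hmem1.mpr ⟨hp, by rw [(hzero p p).mpr rfl]; exact hMpos⟩⟩
  have hne2 : s2.Nonempty :=
    ⟨q, hmem2.mpr ⟨hq, by rw [hpq, ← hM]; exact lt_irrefl M⟩⟩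
  have hcards : s1.card + s2.card = s.card := by
    rw [← hunion]; exact (Finset.card_union_of_disjoint hdisj).symm
  -- distances within s1 are < M
  have hin1 : ∀ x ∈ s1, ∀ y ∈ s1, d x y < M := by
    intro x hx y hy
    obtain ⟨hxs, hxlt⟩ := hmem1.mp hx
    obtain ⟨hys, hylt⟩ := hmem1.mp hy
    calc d x y ≤ max (d x p) (d p y) := hultra x y p
      _ < M := max_lt (by rw [hsymm x p] at *; exact hxlt) hylt
  -- cross distances are = M
  have hcross : ∀ x ∈ s1, ∀ y ∈ s2, d x y = M := by
    intro x hx y hy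
    obtain ⟨hxs, hxlt⟩ := hmem1.mp hx
    obtain ⟨hys, hynlt⟩ := hmem2.mp hy
    have hyM : d p y = M := le_antisymm (hle p hp y hys) (not_lt.mp hynlt)
    have h1 : d p y ≤ max (d p x) (d x y) := hultra p y x
    have h2 : M ≤ d x y := by
      rcases le_max_iff.mp h1 with h | h
      · rw [hyM] at h; exact absurd (lt_of_le_of_lt h hxlt) (lt_irrefl M)
      · rw [hyM] at h; exact h
    exact le_antisymm (hle x (hsub1 hx) y hys) h2
  have hMnot1 : M ∉ pspec d s1 := by
    intro hMin
    obtain ⟨⟨x, hx, y, hy, hv⟩, _⟩ := (mem_pspec d).mp hMin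
    exact absurd (hv ▸ hin1 x hx y hy) (lt_irrefl M)
  refine ⟨s1, s2, M, hsub1, hsub2, hdisj, hne1, hne2, hunion, hcards, hMpos,
    hcross, hMnot1, ?_⟩
  ext v
  simp only [Finset.mem_insert, Finset.mem_union]
  constructor
  · intro hv
    obtain ⟨⟨x, hx, y, hy, hvd⟩, hvpos⟩ := (mem_pspec d).mp hv
    rw [← hunion, Finset.mem_union] at hx hy
    rcases hx with hx | hx <;> rcases hy with hy | hy
    · exact Or.inr (Or.inl ((mem_pspec d).mpr ⟨⟨x, hx, y, hy, hvd⟩, hvpos⟩))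
    · refine Or.inl ?_
      rw [← hvd]
      exact hcross x hx y hy
    · refine Or.inl ?_
      rw [← hvd, hsymm x y]
      exact hcross y hy x hx
    · exact Or.inr (Or.inr ((mem_pspec d).mpr ⟨⟨x, hx, y, hy, hvd⟩, hvpos⟩))
  · rintro (rfl | hv | hv)
    · exact (mem_pspec d).mpr ⟨⟨p, hp, q, hq, hpq⟩, hMpos⟩
    · exact pspec_mono d hsub1 hv
    · exact pspec_mono d hsub2 hv

include hnonneg hsymm hzero hultra in
/-- The Gomory–Hu inequality: an `n`-point ultrametric space has at most `n-1`
nonzero distances. -/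
lemma gomory_hu (s : Finset X) (hs : s.Nonempty) : (pspec d s).card < s.card := by
  induction s using Finset.strongInduction with
  | _ s ih =>
    rcases le_or_gt s.card 1 with h1 | h1
    · have hcard1 : s.card = 1 := le_antisymm h1 (Finset.card_pos.mpr hs)
      obtain ⟨a, rfl⟩ := Finset.card_eq_one.mp hcard1
      have : pspec d {a} = ∅ := by
        rw [Finset.eq_empty_iff_forall_notMem]
        intro v hv
        obtain ⟨⟨x, hx, y, hy, hvd⟩, hvpos⟩ := (mem_pspec d).mp hv
        rw [Finset.mem_singleton] at hx hy
        rw [hx, hy, (hzero _ _).mpr rfl] at hvd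
        linarith
      rw [this]; simp
    · obtain ⟨s1, s2, M, hsub1, hsub2, hdisj, hne1, hne2, _, hcards, _, _, _,
        hpspec⟩ := split d hnonneg hsymm hzero hultra s h1
      have hss1 : s1 ⊂ s := Finset.ssubset_iff_of_subset hsub1 |>.mpr
        ⟨hne2.choose, hsub2 hne2.choose_spec,
          Finset.disjoint_right.mp hdisj hne2.choose_spec⟩
      have hss2 : s2 ⊂ s := Finset.ssubset_iff_of_subset hsub2 |>.mpr
        ⟨hne1.choose, hsub1 hne1.choose_spec,
          Finset.disjoint_left.mp hdisj hne1.choose_spec⟩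
      have ih1 := ih s1 hss1 hne1
      have ih2 := ih s2 hss2 hne2
      have hb : (pspec d s).card ≤ (pspec d s1).card + (pspec d s2).card + 1 := by
        rw [hpspec]
        calc (insert M (pspec d s1 ∪ pspec d s2)).card
            ≤ (pspec d s1 ∪ pspec d s2).card + 1 := Finset.card_insert_le _ _
          _ ≤ (pspec d s1).card + (pspec d s2).card + 1 := by
              have := Finset.card_union_le (pspec d s1) (pspec d s2)
              omega
      omega

/-- Edge values of a path. -/
def edges (l : List X) : List ℝ := (l.zip l.tail).map fun p => d p.1 p.2

lemma mem_of_mem_edges {l : List X} {r : ℝ} (hr : r ∈ edges d l) :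
    ∃ x ∈ l, ∃ y ∈ l, d x y = r := by
  obtain ⟨⟨x, y⟩, hxy, rfl⟩ := List.mem_map.mp hr
  exact ⟨x, (List.of_mem_zip hxy).1, y,
    List.mem_of_mem_tail (List.of_mem_zip hxy).2, rfl⟩

lemma zip_tail_append (l1 l2 : List X) (h1 : l1 ≠ []) (h2 : l2 ≠ []) :
    (l1 ++ l2).zip (l1 ++ l2).tail =
      l1.zip l1.tail ++ (l1.getLast h1, l2.head h2) :: l2.zip l2.tail := by
  induction l1 with
  | nil => exact absurd rfl h1
  | cons a t ih =>
    cases t with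
    | nil =>
      cases l2 with
      | nil => exact absurd rfl h2
      | cons b u => simp [List.zip_cons_cons]
    | cons b t' =>
      have key := ih (by simp)
      simp only [List.cons_append, List.tail_cons] at key ⊢
      rw [List.zip_cons_cons, key, List.zip_cons_cons]
      simp [List.getLast_cons]

lemma edges_append (l1 l2 : List X) (h1 : l1 ≠ []) (h2 : l2 ≠ []) :
    edges d (l1 ++ l2) =
      edges d l1 ++ d (l1.getLast h1) (l2.head h2) :: edges d l2 := by
  unfold edges
  rw [zip_tail_append l1 l2 h1 h2]
  simp

lemma edges_length (l : List X) : (edges d l).length = l.length - 1 := by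
  unfold edges
  rw [List.length_map, List.length_zip, List.length_tail]
  omega

include hnonneg hsymm hzero hultra in
/-- Forward direction: an extremal space admits a characteristic Hamiltonian
path. -/
lemma to_path (s : Finset X) (hs : s.Nonempty)
    (hcard : (pspec d s).card + 1 = s.card) :
    ∃ l : List X, l ≠ [] ∧ l.Nodup ∧ (∀ x, x ∈ l ↔ x ∈ s) ∧
      (edges d l).Nodup ∧ (∀ r ∈ edges d l, 0 < r) ∧
      (∀ r ∈ edges d l, r ∈ pspec d s) := by
  induction s using Finset.strongInduction with
  | _ s ih =>
    rcases le_or_gt s.card 1 with h1 | h1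
    · have hcard1 : s.card = 1 := le_antisymm h1 (Finset.card_pos.mpr hs)
      obtain ⟨a, rfl⟩ := Finset.card_eq_one.mp hcard1
      refine ⟨[a], by simp, by simp, by simp, ?_, ?_, ?_⟩ <;>
        simp [edges]
    · obtain ⟨s1, s2, M, hsub1, hsub2, hdisj, hne1, hne2, hunion, hcards,
        hMpos, hcross, hMnot1, hpspec⟩ := split d hnonneg hsymm hzero hultra s h1
      have hss1 : s1 ⊂ s := Finset.ssubset_iff_of_subset hsub1 |>.mpr
        ⟨hne2.choose, hsub2 hne2.choose_spec,
          Finset.disjoint_right.mp hdisj hne2.choose_spec⟩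
      have hss2 : s2 ⊂ s := Finset.ssubset_iff_of_subset hsub2 |>.mpr
        ⟨hne1.choose, hsub1 hne1.choose_spec,
          Finset.disjoint_left.mp hdisj hne1.choose_spec⟩
      have gh1 := gomory_hu d hnonneg hsymm hzero hultra s1 hne1
      have gh2 := gomory_hu d hnonneg hsymm hzero hultra s2 hne2
      -- counting
      have hub : (pspec d s).card ≤ (pspec d s1 ∪ pspec d s2).card + 1 := by
        rw [hpspec]; exact Finset.card_insert_le _ _
      have hub2 := Finset.card_union_le (pspec d s1) (pspec d s2)
      have hA : (pspec d s1).card + 1 = s1.card := by omega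
      have hB : (pspec d s2).card + 1 = s2.card := by omega
      have hUcard : (pspec d s1 ∪ pspec d s2).card
          = (pspec d s1).card + (pspec d s2).card := by
        have hins := Finset.card_insert_le M (pspec d s1 ∪ pspec d s2)
        omega
      have hdisjAB : Disjoint (pspec d s1) (pspec d s2) :=
        Finset.card_union_eq_card_add_card.mp hUcard
      have hMnotU : M ∉ pspec d s1 ∪ pspec d s2 := by
        intro hMU
        have : (pspec d s).card = (pspec d s1 ∪ pspec d s2).card := by
          rw [hpspec, Finset.insert_eq_self.mpr hMU]
        omega
      -- recurse
      obtain ⟨l1, l1ne, l1nd, l1mem, e1nd, e1pos, e1in⟩ := ih s1 hss1 hne1 hA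
      obtain ⟨l2, l2ne, l2nd, l2mem, e2nd, e2pos, e2in⟩ := ih s2 hss2 hne2 hB
      have hlast : l1.getLast l1ne ∈ s1 := (l1mem _).mp (List.getLast_mem l1ne)
      have hhead : l2.head l2ne ∈ s2 := (l2mem _).mp (List.head_mem l2ne)
      have hjoin : d (l1.getLast l1ne) (l2.head l2ne) = M :=
        hcross _ hlast _ hhead
      have hE : edges d (l1 ++ l2) =
          edges d l1 ++ d (l1.getLast l1ne) (l2.head l2ne) :: edges d l2 :=
        edges_append d l1 l2 l1ne l2ne
      refine ⟨l1 ++ l2, by simp [l1ne], ?_, ?_, ?_, ?_, ?_⟩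
      · refine l1nd.append l2nd ?_
        intro x hx1 hx2
        exact Finset.disjoint_left.mp hdisj ((l1mem x).mp hx1) ((l2mem x).mp hx2)
      · intro x
        rw [List.mem_append, l1mem, l2mem, ← hunion, Finset.mem_union]
      · rw [hE]
        refine List.Nodup.append e1nd (List.nodup_cons.mpr ⟨?_, e2nd⟩) ?_
        · rw [hjoin]
          intro hM
          exact hMnotU (Finset.mem_union_right _ (e2in M hM))
        · intro r hr1 hr2
          rcases List.mem_cons.mp hr2 with rfl | hr2
          · rw [hjoin] at hr1
            exact hMnotU (Finset.mem_union_left _ (e1in _ hr1))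
          · exact Finset.disjoint_left.mp hdisjAB (e1in r hr1) (e2in r hr2)
      · rw [hE]
        intro r hr
        rcases List.mem_append.mp hr with hr | hr
        · exact e1pos r hr
        · rcases List.mem_cons.mp hr with rfl | hr
          · rw [hjoin]; exact hMpos
          · exact e2pos r hr
      · rw [hE]
        intro r hr
        rcases List.mem_append.mp hr with hr | hr
        · exact pspec_mono d hsub1 (e1in r hr)
        · rcases List.mem_cons.mp hr with rfl | hr
          · exact (mem_pspec d).mpr
              ⟨⟨_, hsub1 hlast, _, hsub2 hhead, rfl⟩, by rw [hjoin]; exact hMpos⟩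
          · exact pspec_mono d hsub2 (e2in r hr)

include hnonneg hsymm hzero hultra in
/-- Backward direction: a characteristic Hamiltonian path forces extremality. -/
lemma of_path (s : Finset X) (l : List X) (hne : l ≠ []) (hnd : l.Nodup)
    (hmem : ∀ x, x ∈ l ↔ x ∈ s) (hend : (edges d l).Nodup)
    (hepos : ∀ r ∈ edges d l, 0 < r) :
    (pspec d s).card + 1 = s.card := by
  have hs : s.Nonempty := by
    cases l with
    | nil => exact absurd rfl hne
    | cons a t => exact ⟨a, (hmem a).mp (by simp)⟩
  have hlen : l.length = s.card := by
    have : l.toFinset = s := by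
      ext x; rw [List.mem_toFinset]; exact hmem x
    rw [← this, List.toFinset_card_of_nodup hnd]
  have hsubE : (edges d l).toFinset ⊆ pspec d s := by
    intro r hr
    rw [List.mem_toFinset] at hr
    obtain ⟨x, hx, y, hy, hd⟩ := mem_of_mem_edges d hr
    exact (mem_pspec d).mpr
      ⟨⟨x, (hmem x).mp hx, y, (hmem y).mp hy, hd⟩, hepos r hr⟩
  have hEcard : (edges d l).toFinset.card = s.card - 1 := by
    rw [List.toFinset_card_of_nodup hend, edges_length, hlen]
  have hle := Finset.card_le_card hsubE
  have hgh := gomory_hu d hnonneg hsymm hzero hultra s hs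
  have hpos := Finset.card_pos.mpr hs
  omega

end CharHamAux

open CharHamAux in
/-- A finite ultrametric space with at least 3 points is extremal for the
Gomory-Hu inequality iff its complete weighted graph contains a characteristic
Hamiltonian path (all consecutive distances positive and pairwise distinct). -/
theorem extremal_iff_characteristic_hamiltonian_path {X : Type*} [Fintype X]
    (d : X → X → ℝ)
    (hcard : 3 ≤ Fintype.card X)
    (hnonneg : ∀ x y, 0 ≤ d x y)
    (hsymm : ∀ x y, d x y = d y x)
    (hzero : ∀ x y, d x y = 0 ↔ x = y)
    (hultra : ∀ x y z, d x y ≤ max (d x z) (d z y)) :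
    (Finset.univ.image (fun p : X × X => d p.1 p.2)).card = Fintype.card X ↔
      ∃ l : List X, l.Nodup ∧ (∀ x : X, x ∈ l) ∧
        ((l.zip l.tail).map (fun p => d p.1 p.2)).Nodup ∧
        (∀ r ∈ (l.zip l.tail).map (fun p => d p.1 p.2), (0 : ℝ) < r) := by
  classical
  have huniv : (Finset.univ.image (fun p : X × X => d p.1 p.2))
      = spec d Finset.univ := by
    unfold spec
    rw [Finset.univ_product_univ]
  have hne : (Finset.univ : Finset X).Nonempty :=
    Finset.univ_nonempty_iff.mpr
      (Fintype.card_pos_iff.mp (by omega))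
  have hcs := card_spec d hnonneg hzero Finset.univ hne
  rw [huniv, hcs, ← Finset.card_univ]
  constructor
  · intro h
    obtain ⟨l, lne, lnd, lmem, end', epos, _⟩ :=
      to_path d hnonneg hsymm hzero hultra Finset.univ hne h
    exact ⟨l, lnd, fun x => (lmem x).mpr (Finset.mem_univ x), end', epos⟩
  · rintro ⟨l, lnd, lmem, end', epos⟩
    have lne : l ≠ [] := by
      intro h
      obtain ⟨x⟩ := Fintype.card_pos_iff.mp (by omega : 0 < Fintype.card X)
      exact absurd (lmem x) (h ▸ (by simp : x ∉ ([] : List X)))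
    exact of_path d hnonneg hsymm hzero hultra Finset.univ l lne lnd
      (fun x => ⟨fun _ => Finset.mem_univ x, fun _ => lmem x⟩) end' epos
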